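/- The function f : [0,∞) → ℝ defined by f(x) = 1/2 − (e^{−x} + x − 1)/x² for x > 0 and f(0) = 0 is monotone increasing, bounded above by 1/2, satisfies f(x) = O(x) as x → 0⁺, and its derivative is bounded by 1 for x > 0. -/

import Mathlib

open Asymptotics

/-- Generic: f 0 = 0 and f' ≥ 0 on nonnegatives gives f ≥ 0 on nonnegatives. -/
lemma nonneg_of_deriv {f f' : ℝ → ℝ} (hd : ∀ x, HasDerivAt f (f' x) x)
    (h0 : f 0 = 0) (h' : ∀ x, 0 ≤ x → 0 ≤ f' x) : ∀ x, 0 ≤ x → 0 ≤ f x := by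
  have hmono : MonotoneOn f (Set.Ici 0) := by
    apply monotoneOn_of_hasDerivWithinAt_nonneg (convex_Ici 0)
      (fun x _ => (hd x).continuousAt.continuousWithinAt)
      (fun x hx => (hd x).hasDerivWithinAt)
    intro x hx
    rw [interior_Ici] at hx
    exact h' x hx.le
  intro x hx
  calc (0:ℝ) = f 0 := h0.symm
    _ ≤ f x := hmono Set.self_mem_Ici hx hx

lemma hexp (x : ℝ) : HasDerivAt (fun y : ℝ => Real.exp (-y)) (-Real.exp (-x)) x := by
  simpa [Function.comp_def] using ((Real.hasDerivAt_exp (-x)).comp x (hasDerivAt_neg x))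

lemma L1 (x : ℝ) : 1 - x ≤ Real.exp (-x) := by
  have := Real.add_one_le_exp (-x); linarith

lemma L2 (x : ℝ) (hx : 0 ≤ x) : Real.exp (-x) ≤ 1 - x + x ^ 2 / 2 := by
  have := nonneg_of_deriv (f := fun y => 1 - y + y ^ 2 / 2 - Real.exp (-y))
    (f' := fun y => -1 + y + Real.exp (-y))
    (fun y => by
      have h := ((hasDerivAt_id y).const_sub 1 |>.add
        (((hasDerivAt_pow 2 y).div_const 2))).sub (hexp y)
      exact h.congr_deriv (by simp))
    (by simp) (fun y hy => by show (0:ℝ) ≤ -1 + y + Real.exp (-y); have := L1 y; linarith) x hx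
  linarith

lemma L3 (x : ℝ) (hx : 0 ≤ x) : 1 - x + x ^ 2 / 2 - x ^ 3 / 6 ≤ Real.exp (-x) := by
  have := nonneg_of_deriv (f := fun y => Real.exp (-y) - (1 - y + y ^ 2 / 2 - y ^ 3 / 6))
    (f' := fun y => -Real.exp (-y) + 1 - y + y ^ 2 / 2)
    (fun y => by
      have h := (hexp y).sub ((((hasDerivAt_id y).const_sub 1).add
        ((hasDerivAt_pow 2 y).div_const 2)).sub ((hasDerivAt_pow 3 y).div_const 6))
      exact h.congr_deriv (by simp; ring))
    (by simp) (fun y hy => by show (0:ℝ) ≤ -Real.exp (-y) + 1 - y + y ^ 2 / 2; have := L2 y hy; linarith) x hx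
  linarith

lemma LD (x : ℝ) (hx : 0 ≤ x) : (x + 1) * Real.exp (-x) ≤ 1 := by
  have h1 : x + 1 ≤ Real.exp x := by have := Real.add_one_le_exp x; linarith
  have h2 : (0:ℝ) < Real.exp (-x) := Real.exp_pos _
  calc (x + 1) * Real.exp (-x) ≤ Real.exp x * Real.exp (-x) := by
        apply mul_le_mul_of_nonneg_right h1 h2.le
    _ = 1 := by rw [← Real.exp_add]; simp

lemma L4 (x : ℝ) (hx : 0 ≤ x) : 0 ≤ (x + 2) * Real.exp (-x) + x - 2 := by
  have := nonneg_of_deriv (f := fun y => (y + 2) * Real.exp (-y) + y - 2)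
    (f' := fun y => 1 - (y + 1) * Real.exp (-y))
    (fun y => by
      have h := (((((hasDerivAt_id y).add_const 2).mul (hexp y)).add
        (hasDerivAt_id y))).sub_const 2
      exact h.congr_deriv (by simp; ring))
    (by simp) (fun y hy => by show (0:ℝ) ≤ 1 - (y + 1) * Real.exp (-y); have := LD y hy; linarith) x hx
  linarith

lemma Lq (x : ℝ) (hx : 0 ≤ x) : 0 ≤ 3 * x ^ 2 - 1 + (x + 1) * Real.exp (-x) := by
  have := nonneg_of_deriv (f := fun y => 3 * y ^ 2 - 1 + (y + 1) * Real.exp (-y))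
    (f' := fun y => 6 * y - y * Real.exp (-y))
    (fun y => by
      have h := ((((hasDerivAt_pow 2 y).const_mul 3).sub_const 1).add
        ((((hasDerivAt_id y).add_const 1)).mul (hexp y)))
      exact h.congr_deriv (by simp; ring))
    (by simp) (fun y hy => by
      show (0:ℝ) ≤ 6 * y - y * Real.exp (-y)
      have h1 : Real.exp (-y) ≤ 1 := by
        rw [Real.exp_le_one_iff]; linarith
      nlinarith [Real.exp_pos (-y)]) x hx
  linarith

lemma L5 (x : ℝ) (hx : 0 ≤ x) : (x + 2) * Real.exp (-x) + x - 2 ≤ x ^ 3 := by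
  have := nonneg_of_deriv (f := fun y => y ^ 3 - ((y + 2) * Real.exp (-y) + y - 2))
    (f' := fun y => 3 * y ^ 2 - 1 + (y + 1) * Real.exp (-y))
    (fun y => by
      have h := (hasDerivAt_pow 3 y).sub
        ((((((hasDerivAt_id y).add_const 2).mul (hexp y)).add
          (hasDerivAt_id y))).sub_const 2)
      exact h.congr_deriv (by simp; ring))
    (by simp) (fun y hy => Lq y hy) x hx
  linarith

/-- The continuous extension of `x ↦ 1/2 − (e^{−x} + x − 1)/x²` by `0` at `0`. -/
noncomputable def fAux (x : ℝ) : ℝ :=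
  if x = 0 then 0 else 1 / 2 - (Real.exp (-x) + x - 1) / x ^ 2

lemma hasDeriv_fAux {x : ℝ} (hx : 0 < x) :
    HasDerivAt fAux (((x + 2) * Real.exp (-x) + x - 2) / x ^ 3) x := by
  have hx0 : x ≠ 0 := hx.ne'
  have hN : HasDerivAt (fun y => Real.exp (-y) + y - 1) (-Real.exp (-x) + 1) x :=
    ((hexp x).add (hasDerivAt_id x)).sub_const 1
  have hD : HasDerivAt (fun y : ℝ => y ^ 2) ((2:ℕ) * x ^ 1) x := hasDerivAt_pow 2 x
  have hdiv := hN.div hD (pow_ne_zero 2 hx0)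
  have hg := hdiv.const_sub (1/2)
  have heq : fAux =ᶠ[nhds x] fun y => 1/2 - (Real.exp (-y) + y - 1) / y ^ 2 := by
    filter_upwards [eventually_ne_nhds hx0] with y hy
    simp [fAux, hy]
  have h := hg.congr_of_eventuallyEq heq
  refine h.congr_deriv ?_
  field_simp
  ring

lemma fAux_nonneg (x : ℝ) (hx : 0 ≤ x) : 0 ≤ fAux x := by
  rcases eq_or_lt_of_le hx with h | h
  · simp [fAux, ← h]
  · rw [fAux, if_neg h.ne']
    have h2 := L2 x hx
    have hsq : (0:ℝ) < x ^ 2 := by positivity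
    rw [sub_nonneg, div_le_iff₀ hsq]
    nlinarith

lemma fAux_le_sixth (x : ℝ) (hx : 0 < x) : fAux x ≤ x / 6 := by
  rw [fAux, if_neg hx.ne']
  have h3 := L3 x hx.le
  have hsq : (0:ℝ) < x ^ 2 := by positivity
  rw [sub_le_iff_le_add, ← sub_le_iff_le_add', le_div_iff₀ hsq]
  nlinarith


/-- The function `f(x) = 1/2 − (e^{−x} + x − 1)/x²` (with `f(0) = 0`) is monotone increasing
on `[0, ∞)`, bounded above by `1/2`, satisfies `f(x) = O(x)` as `x → 0⁺`, and its derivative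
is bounded by `1` for `x > 0`. -/
theorem fAux_properties :
    MonotoneOn fAux (Set.Ici 0) ∧
    (∀ x : ℝ, 0 ≤ x → fAux x ≤ 1 / 2) ∧
    (fAux =O[nhdsWithin 0 (Set.Ioi 0)] fun x => x) ∧
    (∀ x : ℝ, 0 < x → |deriv fAux x| ≤ 1) := by
  refine ⟨?_, ?_, ?_, ?_⟩
  · intro a ha b hb hab
    rcases eq_or_lt_of_le (Set.mem_Ici.mp ha) with h | h
    · rw [← h]
      simpa [fAux] using fAux_nonneg b hb
    · have hmono : MonotoneOn fAux (Set.Icc a b) := by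
        apply monotoneOn_of_hasDerivWithinAt_nonneg (convex_Icc a b)
          (f' := fun x => ((x + 2) * Real.exp (-x) + x - 2) / x ^ 3)
        · intro x hx
          exact (hasDeriv_fAux (lt_of_lt_of_le h hx.1)).continuousAt.continuousWithinAt
        · intro x hx
          rw [interior_Icc] at hx
          exact (hasDeriv_fAux (h.trans hx.1)).hasDerivWithinAt
        · intro x hx
          rw [interior_Icc] at hx
          have hx0 : 0 < x := h.trans hx.1
          exact div_nonneg (L4 x hx0.le) (by positivity)
      exact hmono ⟨le_refl a, hab⟩ ⟨hab, le_refl b⟩ hab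
  · intro x hx
    rcases eq_or_lt_of_le hx with h | h
    · simp [fAux, ← h]
    · rw [fAux, if_neg h.ne']
      have h1 := L1 x
      have hsq : (0:ℝ) < x ^ 2 := by positivity
      have : 0 ≤ (Real.exp (-x) + x - 1) / x ^ 2 := div_nonneg (by linarith) hsq.le
      linarith
  · rw [isBigO_iff]
    refine ⟨1, ?_⟩
    filter_upwards [self_mem_nhdsWithin] with x hx
    have hx' : (0:ℝ) < x := hx
    rw [Real.norm_eq_abs, Real.norm_eq_abs, abs_of_nonneg (fAux_nonneg x hx'.le),
      abs_of_pos hx']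
    have := fAux_le_sixth x hx'
    linarith
  · intro x hx
    rw [(hasDeriv_fAux hx).deriv]
    have h4 := L4 x hx.le
    have h5 := L5 x hx.le
    have hc : (0:ℝ) < x ^ 3 := by positivity
    rw [abs_of_nonneg (div_nonneg h4 hc.le), div_le_one hc]
    exact h5
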